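/- Let k and a be integers with 2 ≤ a ≤ k−2, and let B(k,a) be the broom on k vertices, i.e., the spider S_{a−1,1,…,1} with one leg of a−1 edges and k−a legs of one edge each. Then for every n ≥ k, ex_c(n, B(k,a)) ≥ max{ ⌊(k−a)n/2⌋, ⌊(a−1)/2⌋ · (n − ⌊(a−1)/2⌋) }. -/

import Mathlib

open SimpleGraph

/-- `G` contains a copy of `F`, i.e. a subgraph isomorphic to `F`
(given by an injective graph homomorphism). -/
def ContainsCopy {α β : Type*} (F : SimpleGraph α) (G : SimpleGraph β) : Prop :=
  ∃ f : α ↪ β, ∀ ⦃a b : α⦄, F.Adj a b → G.Adj (f a) (f b)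

/-- The connected Turán number `ex_c(n, F)`: the maximum number of edges of a
connected `F`-free simple graph on `n` vertices. -/
noncomputable def exConn {α : Type*} (n : ℕ) (F : SimpleGraph α) : ℕ :=
  sSup {m | ∃ G : SimpleGraph (Fin n), G.Connected ∧ ¬ ContainsCopy F G ∧ m = G.edgeSet.ncard}

/-- The broom `B(k,a)`: the spider `S_{a-1,1,…,1}` on `k` vertices, with center `0`,
one leg `0 - 1 - ⋯ - (a-1)` of `a-1` edges, and `k-a` legs of one edge each
(the pendant vertices `a, …, k-1` adjacent to the center `0`). -/
def broom (k a : ℕ) : SimpleGraph (Fin k) :=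
  SimpleGraph.fromRel (fun i j =>
    ((i : ℕ) + 1 = (j : ℕ) ∧ (j : ℕ) < a) ∨ ((i : ℕ) = 0 ∧ a ≤ (j : ℕ)))

section Aux
open Finset

lemma le_exConn {α : Type*} {n : ℕ} (F : SimpleGraph α) (G : SimpleGraph (Fin n))
    (hc : G.Connected) (hf : ¬ ContainsCopy F G) : G.edgeSet.ncard ≤ exConn n F := by
  apply le_csSup
  · refine ⟨Nat.card (Sym2 (Fin n)), ?_⟩
    rintro x ⟨H, -, -, rfl⟩
    have : H.edgeSet.ncard ≤ (Set.univ : Set (Sym2 (Fin n))).ncard :=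
      Set.ncard_le_ncard (Set.subset_univ _) Set.finite_univ
    rwa [Set.ncard_univ] at this
  · exact ⟨G, hc, hf, rfl⟩

-- card of filter lemmas
lemma card_filter_val_lt (n b : ℕ) (hb : b ≤ n) :
    ((univ : Finset (Fin n)).filter (fun v : Fin n => (v : ℕ) < b)).card = b := by
  have : (univ : Finset (Fin n)).filter (fun v : Fin n => (v : ℕ) < b)
      = (Finset.range b).attachFin (fun m hm => lt_of_lt_of_le (Finset.mem_range.mp hm) hb) := by
    ext v; simp [Finset.mem_attachFin]
  rw [this, Finset.card_attachFin, Finset.card_range]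

lemma card_filter_val_ge (n b : ℕ) (hb : b ≤ n) :
    ((univ : Finset (Fin n)).filter (fun v : Fin n => b ≤ (v : ℕ))).card = n - b := by
  have h := Finset.card_filter_add_card_filter_not
    (s := (univ : Finset (Fin n))) (p := fun v : Fin n => (v : ℕ) < b)
  rw [card_filter_val_lt n b hb] at h
  have h2 : ((univ : Finset (Fin n)).filter (fun v : Fin n => ¬ (v : ℕ) < b))
      = ((univ : Finset (Fin n)).filter (fun v : Fin n => b ≤ (v : ℕ))) := by
    apply Finset.filter_congr; intro v _; simp [Nat.not_lt]
  rw [h2] at h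
  simp at h
  omega

lemma card_even_range (a : ℕ) : ((Finset.range a).filter (fun i => i % 2 = 0)).card = (a+1)/2 := by
  induction a with
  | zero => simp
  | succ a ih =>
    rw [Finset.range_add_one, Finset.filter_insert]
    by_cases h : a % 2 = 0
    · rw [if_pos h, Finset.card_insert_of_notMem (by simp)] ; omega
    · rw [if_neg h]; omega

lemma card_odd_range (a : ℕ) : ((Finset.range a).filter (fun i => i % 2 = 1)).card = a/2 := by
  induction a with
  | zero => simp
  | succ a ih =>
    rw [Finset.range_add_one, Finset.filter_insert]
    by_cases h : a % 2 = 1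
    · rw [if_pos h, Finset.card_insert_of_notMem (by simp)]; omega
    · rw [if_neg h]; omega

-- modular helper
lemma mod_diff_eq {n i u t : ℕ} (hn : 0 < n) (hi : i < n) (hu : u < n) (ht : t < n) :
    (u + n - i) % n = t ↔ u = (i + t) % n := by
  rcases Nat.lt_or_ge u i with h | h
  · have e1 : (u + n - i) % n = u + n - i := Nat.mod_eq_of_lt (by omega)
    rcases Nat.lt_or_ge (i + t) n with h2 | h2
    · have e2 : (i + t) % n = i + t := Nat.mod_eq_of_lt h2
      omega
    · have e2 : (i + t) % n = i + t - n := by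
        rw [Nat.mod_eq_sub_mod h2, Nat.mod_eq_of_lt (by omega)]
      omega
  · have e1 : (u + n - i) % n = u - i := by
      have : u + n - i = (u - i) + n := by omega
      rw [this, Nat.add_mod_right, Nat.mod_eq_of_lt (by omega)]
    rcases Nat.lt_or_ge (i + t) n with h2 | h2
    · have e2 : (i + t) % n = i + t := Nat.mod_eq_of_lt h2
      omega
    · have e2 : (i + t) % n = i + t - n := by
        rw [Nat.mod_eq_sub_mod h2, Nat.mod_eq_of_lt (by omega)]
      omega

lemma broom_adj_path {k a i : ℕ} (h : i + 1 < a) (hk : a ≤ k) :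
    (broom k a).Adj ⟨i, by omega⟩ ⟨i+1, by omega⟩ := by
  rw [broom, SimpleGraph.fromRel_adj]
  exact ⟨by simp [Fin.ext_iff], Or.inl (Or.inl ⟨rfl, h⟩)⟩

lemma broom_adj_pendant {k a j : ℕ} (ha : 1 ≤ a) (hj : a ≤ j) (hjk : j < k) :
    (broom k a).Adj ⟨0, by omega⟩ ⟨j, hjk⟩ := by
  rw [broom, SimpleGraph.fromRel_adj]
  exact ⟨by simp [Fin.ext_iff]; omega, Or.inl (Or.inr ⟨rfl, hj⟩)⟩

def bipG (n b : ℕ) : SimpleGraph (Fin n) :=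
  SimpleGraph.fromRel (fun i j => (i : ℕ) < b ∧ b ≤ (j : ℕ))

lemma bipG_adj {n b : ℕ} {i j : Fin n} :
    (bipG n b).Adj i j ↔ (((i:ℕ) < b ∧ b ≤ (j:ℕ)) ∨ ((j:ℕ) < b ∧ b ≤ (i:ℕ))) := by
  rw [bipG, SimpleGraph.fromRel_adj]
  constructor
  · rintro ⟨-, h⟩; exact h
  · intro h
    refine ⟨?_, h⟩
    rintro rfl
    omega

instance {n b : ℕ} : DecidableRel (bipG n b).Adj :=
  fun i j => decidable_of_iff _ bipG_adj.symm

lemma bipG_degree_lt {n b : ℕ} (hb : b ≤ n) {i : Fin n} (hi : (i:ℕ) < b) :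
    (bipG n b).degree i = n - b := by
  have h : (bipG n b).neighborFinset i = univ.filter (fun v : Fin n => b ≤ (v:ℕ)) := by
    ext u
    simp only [SimpleGraph.mem_neighborFinset, bipG_adj, mem_filter, mem_univ, true_and]
    omega
  show ((bipG n b).neighborFinset i).card = n - b
  rw [h, card_filter_val_ge n b hb]

lemma bipG_degree_ge {n b : ℕ} (hb : b ≤ n) {i : Fin n} (hi : b ≤ (i:ℕ)) :
    (bipG n b).degree i = b := by
  have h : (bipG n b).neighborFinset i = univ.filter (fun v : Fin n => (v:ℕ) < b) := by
    ext u
    simp only [SimpleGraph.mem_neighborFinset, bipG_adj, mem_filter, mem_univ, true_and]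
    omega
  show ((bipG n b).neighborFinset i).card = b
  rw [h, card_filter_val_lt n b hb]

lemma bipG_card {n b : ℕ} (hb : b ≤ n) : (bipG n b).edgeFinset.card = b * (n - b) := by
  have hsum := (bipG n b).sum_degrees_eq_twice_card_edges
  rw [← Finset.sum_filter_add_sum_filter_not univ (fun v : Fin n => (v:ℕ) < b)] at hsum
  rw [Finset.sum_congr rfl (fun v hv => bipG_degree_lt hb (Finset.mem_filter.mp hv).2)] at hsum
  rw [Finset.sum_congr rfl (fun v hv => bipG_degree_ge hb
    (by have := (Finset.mem_filter.mp hv).2; omega))] at hsum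
  rw [Finset.sum_const, Finset.sum_const, card_filter_val_lt n b hb] at hsum
  have h2 : (univ.filter (fun v : Fin n => ¬ (v:ℕ) < b)) =
      (univ.filter (fun v : Fin n => b ≤ (v:ℕ))) := by
    apply Finset.filter_congr; intro v _; simp [Nat.not_lt]
  rw [h2, card_filter_val_ge n b hb] at hsum
  simp only [smul_eq_mul] at hsum
  have : b * (n - b) + (n - b) * b = 2 * (b * (n-b)) := by ring
  omega

lemma bipG_connected {n b : ℕ} (hb : 1 ≤ b) (hbn : b < n) : (bipG n b).Connected := by
  rw [SimpleGraph.connected_iff]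
  have h0 : (0 : ℕ) < n := by omega
  refine ⟨?_, ⟨⟨0, h0⟩⟩⟩
  have key : ∀ v : Fin n, (bipG n b).Reachable ⟨0, h0⟩ v := by
    intro v
    rcases Nat.lt_or_ge (v : ℕ) b with h | h
    · have h1 : (bipG n b).Adj ⟨0, h0⟩ ⟨b, hbn⟩ := by rw [bipG_adj]; simp; omega
      have h2 : (bipG n b).Adj ⟨b, hbn⟩ v := by rw [bipG_adj]; simp; omega
      exact h1.reachable.trans h2.reachable
    · have h1 : (bipG n b).Adj ⟨0, h0⟩ v := by rw [bipG_adj]; simp; omega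
      exact h1.reachable
  intro u v
  exact (key u).symm.trans (key v)

lemma bipG_free {n k a b : ℕ} (ha : 2 ≤ a) (hk : a + 2 ≤ k) (hkn : k ≤ n)
    (hb : b = (a - 1) / 2) : ¬ ContainsCopy (broom k a) (bipG n b) := by
  rintro ⟨f, hf⟩
  have hak : a ≤ k := by omega
  have hbn : b ≤ n := by omega
  have cross : ∀ {u v : Fin n}, (bipG n b).Adj u v → ((u:ℕ) < b ↔ ¬ (v:ℕ) < b) := by
    intro u v huv
    rw [bipG_adj] at huv
    omega
  have h0k : 0 < k := by omega
  -- alternation along the path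
  have alt : ∀ i, ∀ hia : i < a,
      ((f ⟨i, by omega⟩ : Fin n) : ℕ) < b ↔ (i % 2 = 0 ↔ ((f ⟨0, h0k⟩ : Fin n) : ℕ) < b) := by
    intro i
    induction i with
    | zero => intro _; simp
    | succ i ih =>
      intro hia
      have hI := ih (by omega)
      have hadj := cross (hf (broom_adj_path (i := i) (by omega) hak))
      omega
  -- the small side as a finset
  have cardW : (univ.filter (fun v : Fin n => (v:ℕ) < b)).card = b := card_filter_val_lt n b hbn
  by_cases hS : ((f ⟨0, h0k⟩ : Fin n) : ℕ) < b
  · -- even indices map into small side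
    set I : Finset (Fin k) := ((Finset.range a).filter (fun i => i % 2 = 0)).attachFin
      (fun m hm => by simp at hm; omega) with hI
    have hcard : I.card = (a+1)/2 := by
      rw [hI, Finset.card_attachFin, card_even_range]
    have hmaps : ∀ x ∈ I, f x ∈ univ.filter (fun v : Fin n => (v:ℕ) < b) := by
      intro x hx
      rw [hI, Finset.mem_attachFin, Finset.mem_filter, Finset.mem_range] at hx
      simp only [Finset.mem_filter, Finset.mem_univ, true_and]
      have := alt (x : ℕ) hx.1
      rw [Fin.eta] at this
      omega
    have hle := Finset.card_le_card_of_injOn f hmaps (f.injective.injOn)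
    rw [hcard, cardW] at hle
    omega
  · -- odd indices and pendants map into small side
    set I : Finset (Fin k) := (((Finset.range a).filter (fun i => i % 2 = 1)) ∪
      Finset.Ico a k).attachFin
      (fun m hm => by simp at hm; omega) with hI
    have hcard : I.card = a/2 + (k - a) := by
      rw [hI, Finset.card_attachFin, Finset.card_union_of_disjoint, card_odd_range,
        Nat.card_Ico]
      rw [Finset.disjoint_left]
      intro x hx hx2
      simp at hx hx2
      omega
    have hmaps : ∀ x ∈ I, f x ∈ univ.filter (fun v : Fin n => (v:ℕ) < b) := by
      intro x hx
      rw [hI, Finset.mem_attachFin, Finset.mem_union, Finset.mem_filter, Finset.mem_range,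
        Finset.mem_Ico] at hx
      simp only [Finset.mem_filter, Finset.mem_univ, true_and]
      rcases hx with ⟨hxa, hxodd⟩ | ⟨hxa, hxk⟩
      · have := alt (x : ℕ) hxa
        rw [Fin.eta] at this
        omega
      · have hadj := cross (hf (broom_adj_pendant (j := (x:ℕ)) (by omega) hxa hxk))
        rw [Fin.eta] at hadj
        omega
    have hle := Finset.card_le_card_of_injOn f hmaps (f.injective.injOn)
    rw [hcard, cardW] at hle
    omega

lemma mod_diff_cases {n i u : ℕ} (hi : i < n) (hu : u < n) :
    (u + n - i) % n = if i ≤ u then u - i else u + n - i := by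
  split_ifs with hle
  · have : u + n - i = (u - i) + n := by omega
    rw [this, Nat.add_mod_right, Nat.mod_eq_of_lt (by omega)]
  · exact Nat.mod_eq_of_lt (by omega)

lemma add_mod_cases {n i t : ℕ} (hi : i < n) (ht : t < n) :
    (i + t) % n = if i + t < n then i + t else i + t - n := by
  split_ifs with hlt
  · exact Nat.mod_eq_of_lt hlt
  · rw [Nat.mod_eq_sub_mod (by omega), Nat.mod_eq_of_lt (by omega)]

def circG (n m h : ℕ) (mat : Bool) : SimpleGraph (Fin n) :=
  SimpleGraph.fromRel (fun i j => ((j:ℕ) + n - (i:ℕ)) % n ∈ Finset.Icc 1 m ∨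
    (mat = true ∧ (j:ℕ) = (i:ℕ) + h ∧ (i:ℕ) < h))

lemma circG_adj {n m h : ℕ} {mat : Bool} {i j : Fin n} :
    (circG n m h mat).Adj i j ↔ i ≠ j ∧
      (((j:ℕ) + n - (i:ℕ)) % n ∈ Finset.Icc 1 m ∨
       ((i:ℕ) + n - (j:ℕ)) % n ∈ Finset.Icc 1 m ∨
       (mat = true ∧ (((j:ℕ) = (i:ℕ) + h ∧ (i:ℕ) < h) ∨ ((i:ℕ) = (j:ℕ) + h ∧ (j:ℕ) < h)))) := by
  rw [circG, SimpleGraph.fromRel_adj]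
  tauto

instance {n m h : ℕ} {mat : Bool} : DecidableRel (circG n m h mat).Adj :=
  fun i j => decidable_of_iff _ circG_adj.symm

def Dset (n m h : ℕ) (mat : Bool) (i : Fin n) : Finset ℕ :=
  (Finset.Icc 1 m ∪ Finset.Icc (n-m) (n-1)) ∪
    (if mat = true ∧ (i:ℕ) < h then {h}
     else if mat = true ∧ h ≤ (i:ℕ) ∧ (i:ℕ) < 2*h then {n - h} else (∅ : Finset ℕ))

lemma Dset_bound {n m h : ℕ} {mat : Bool} {i : Fin n}
    (hm : 1 ≤ m) (hmh : m < h) (hhn : 2*h ≤ n) (hnh : m < n - h) (hn : 2*m+2 ≤ n) :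
    ∀ t ∈ Dset n m h mat i, 1 ≤ t ∧ t ≤ n - 1 := by
  intro t ht
  rw [Dset] at ht
  rcases Finset.mem_union.mp ht with ht | ht
  · rcases Finset.mem_union.mp ht with ht | ht <;> rw [Finset.mem_Icc] at ht <;> omega
  · split_ifs at ht with h1 h2 <;> simp at ht <;> omega

lemma circG_degree {n m h : ℕ} {mat : Bool} (i : Fin n)
    (hm : 1 ≤ m) (hmh : m < h) (hhn : 2*h ≤ n) (hnh : m < n - h) (hn : 2*m+2 ≤ n) :
    (circG n m h mat).degree i = (Dset n m h mat i).card := by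
  have hn0 : 0 < n := by omega
  have hi : (i:ℕ) < n := i.isLt
  rw [← SimpleGraph.card_neighborFinset_eq_degree]
  refine (Finset.card_bij' (i := fun t _ => (⟨((i:ℕ) + t) % n, Nat.mod_lt _ hn0⟩ : Fin n))
    (j := fun u _ => ((u:ℕ) + n - (i:ℕ)) % n) ?_ ?_ ?_ ?_).symm
  · -- maps into neighborFinset
    intro t ht
    obtain ⟨ht1, ht2⟩ := Dset_bound hm hmh hhn hnh hn t ht
    rw [SimpleGraph.mem_neighborFinset, circG_adj]
    simp only [Fin.val_mk]
    have hadd := add_mod_cases (t := t) hi (by omega)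
    rw [Dset] at ht
    constructor
    · simp only [ne_eq, Fin.ext_iff]
      rw [hadd]
      split_ifs <;> omega
    · rcases Finset.mem_union.mp ht with ht | ht
      · rcases Finset.mem_union.mp ht with ht | ht
        · -- t small : forward circulant edge
          rw [Finset.mem_Icc] at ht
          refine Or.inl ?_
          rw [Finset.mem_Icc]
          rw [mod_diff_cases (by omega) (Nat.mod_lt _ hn0), hadd]
          split_ifs <;> omega
        · -- t large : backward circulant edge
          rw [Finset.mem_Icc] at ht
          refine Or.inr (Or.inl ?_)
          rw [Finset.mem_Icc]
          rw [mod_diff_cases (u := (i:ℕ)) (Nat.mod_lt _ hn0) (by omega), hadd]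
          split_ifs <;> omega
      · split_ifs at ht with h1 h2
        · simp only [Finset.mem_singleton] at ht
          subst ht
          refine Or.inr (Or.inr ⟨h1.1, Or.inl ⟨?_, h1.2⟩⟩)
          rw [hadd]
          split_ifs <;> omega
        · simp only [Finset.mem_singleton] at ht
          subst ht
          refine Or.inr (Or.inr ⟨h2.1, Or.inr ⟨?_, ?_⟩⟩)
          · rw [hadd]; split_ifs <;> omega
          · rw [hadd]; split_ifs <;> omega
        · simp at ht
  · -- inverse maps into Dset
    intro u hu
    rw [SimpleGraph.mem_neighborFinset, circG_adj] at hu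
    obtain ⟨hne, hadj⟩ := hu
    have hune : (u:ℕ) ≠ (i:ℕ) := fun e => hne (Fin.ext e.symm)
    have hu' : (u:ℕ) < n := u.isLt
    have hd1 := mod_diff_cases (i := (i:ℕ)) (u := (u:ℕ)) hi hu'
    have hd2 := mod_diff_cases (i := (u:ℕ)) (u := (i:ℕ)) hu' hi
    rw [Dset]
    rcases hadj with hc | hc | ⟨hmat, hc⟩
    · exact Finset.mem_union_left _ (Finset.mem_union_left _ hc)
    · refine Finset.mem_union_left _ (Finset.mem_union_right _ ?_)
      rw [Finset.mem_Icc] at hc ⊢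
      rw [hd1]
      rw [hd2] at hc
      split_ifs <;> split_ifs at hc <;> omega
    · rcases hc with ⟨he, hlt⟩ | ⟨he, hlt⟩
      · refine Finset.mem_union_right _ ?_
        rw [if_pos ⟨hmat, hlt⟩, Finset.mem_singleton, hd1]
        split_ifs <;> omega
      · refine Finset.mem_union_right _ ?_
        rw [if_neg (by omega), if_pos ⟨hmat, by omega, by omega⟩, Finset.mem_singleton, hd1]
        split_ifs <;> omega
  · -- left inverse
    intro t ht
    obtain ⟨ht1, ht2⟩ := Dset_bound hm hmh hhn hnh hn t ht
    dsimp only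
    rw [add_mod_cases hi (by omega), mod_diff_cases hi (by split_ifs <;> omega)]
    split_ifs <;> omega
  · -- right inverse
    intro u hu
    rw [SimpleGraph.mem_neighborFinset] at hu
    have hune : (u:ℕ) ≠ (i:ℕ) := fun e => hu.ne (Fin.ext e.symm)
    have hu' : (u:ℕ) < n := u.isLt
    apply Fin.ext
    dsimp only
    rw [mod_diff_cases hi hu', add_mod_cases hi (by split_ifs <;> omega)]
    split_ifs <;> omega

lemma Dset_card {n m h : ℕ} {mat : Bool} (i : Fin n)
    (hm : 1 ≤ m) (hmh : m < h) (hhn : 2*h ≤ n) (hnh : m < n - h) (hn : 2*m+2 ≤ n) :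
    (Dset n m h mat i).card = 2*m + (if mat = true ∧ (i:ℕ) < 2*h then 1 else 0) := by
  have hbase : (Finset.Icc 1 m ∪ Finset.Icc (n-m) (n-1)).card = 2*m := by
    rw [Finset.card_union_of_disjoint]
    · rw [Nat.card_Icc, Nat.card_Icc]; omega
    · rw [Finset.disjoint_left]
      intro x hx hx2
      rw [Finset.mem_Icc] at hx hx2
      omega
  rw [Dset]
  by_cases h1 : mat = true ∧ (i:ℕ) < h
  · rw [if_pos h1, if_pos ⟨h1.1, by omega⟩, Finset.card_union_of_disjoint, hbase,
      Finset.card_singleton]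
    rw [Finset.disjoint_singleton_right]
    simp only [Finset.mem_union, Finset.mem_Icc]
    omega
  · rw [if_neg h1]
    by_cases h2 : mat = true ∧ h ≤ (i:ℕ) ∧ (i:ℕ) < 2*h
    · rw [if_pos h2, if_pos ⟨h2.1, h2.2.2⟩, Finset.card_union_of_disjoint, hbase,
        Finset.card_singleton]
      rw [Finset.disjoint_singleton_right]
      simp only [Finset.mem_union, Finset.mem_Icc]
      omega
    · have h3 : ¬ (mat = true ∧ (i:ℕ) < 2*h) := by
        rintro ⟨hmt, hlt⟩
        have e1 : ¬ ((i:ℕ) < h) := fun hh => h1 ⟨hmt, hh⟩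
        exact h2 ⟨hmt, by omega, by omega⟩
      rw [if_neg h2, if_neg h3, Finset.union_empty, hbase]
      omega

lemma circG_card {n m h : ℕ} {mat : Bool}
    (hm : 1 ≤ m) (hmh : m < h) (hhn : 2*h ≤ n) (hnh : m < n - h) (hn : 2*m+2 ≤ n) :
    (circG n m h mat).edgeFinset.card = m * n + (if mat = true then h else 0) := by
  have hsum := (circG n m h mat).sum_degrees_eq_twice_card_edges
  have hdeg : ∀ i : Fin n, (circG n m h mat).degree i
      = 2*m + (if mat = true ∧ (i:ℕ) < 2*h then 1 else 0) := fun i => by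
    rw [circG_degree i hm hmh hhn hnh hn, Dset_card i hm hmh hhn hnh hn]
  rw [Finset.sum_congr rfl (fun i _ => hdeg i), Finset.sum_add_distrib, Finset.sum_const,
    Finset.card_univ, Fintype.card_fin, smul_eq_mul] at hsum
  have hite : (∑ i : Fin n, if mat = true ∧ (i:ℕ) < 2*h then 1 else 0)
      = (univ.filter (fun i : Fin n => mat = true ∧ (i:ℕ) < 2*h)).card := by
    simp [Finset.sum_boole]
  rw [hite] at hsum
  have hring : n * (2*m) = 2 * (m*n) := by ring
  cases mat with
  | false =>
    have hflt : (univ.filter (fun i : Fin n => false = true ∧ (i:ℕ) < 2*h)).card = 0 := by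
      simp
    rw [hflt] at hsum
    rw [if_neg (by simp)]
    omega
  | true =>
    have hflt : (univ.filter (fun i : Fin n => true = true ∧ (i:ℕ) < 2*h)).card = 2*h := by
      have he : (univ.filter (fun i : Fin n => true = true ∧ (i:ℕ) < 2*h))
          = (univ.filter (fun i : Fin n => (i:ℕ) < 2*h)) := by
        apply Finset.filter_congr
        intro x _
        simp
      rw [he]
      exact card_filter_val_lt n (2*h) (by omega)
    rw [hflt] at hsum
    rw [if_pos rfl]
    omega
lemma circG_connected {n m h : ℕ} {mat : Bool} (hm : 1 ≤ m) (hmn : m < n) (hn0 : 0 < n) :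
    (circG n m h mat).Connected := by
  rw [SimpleGraph.connected_iff]
  refine ⟨?_, ⟨⟨0, hn0⟩⟩⟩
  have key : ∀ t (ht : t < n), (circG n m h mat).Reachable ⟨0, hn0⟩ ⟨t, ht⟩ := by
    intro t
    induction t with
    | zero => intro _; exact SimpleGraph.Reachable.refl _
    | succ t ih =>
      intro ht
      have h1 := ih (by omega)
      have h2 : (circG n m h mat).Adj ⟨t, by omega⟩ ⟨t+1, ht⟩ := by
        rw [circG_adj]
        constructor
        · simp [Fin.ext_iff]
        · left
          simp only [Fin.val_mk]
          rw [mod_diff_cases (by omega) (by omega), Finset.mem_Icc]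
          split_ifs <;> omega
      exact h1.trans h2.reachable
  intro u v
  have hu := key (u:ℕ) u.isLt
  have hv := key (v:ℕ) v.isLt
  rw [Fin.eta] at hu hv
  exact hu.symm.trans hv

lemma broom_free_of_degree_le {n k a : ℕ} (G : SimpleGraph (Fin n)) [DecidableRel G.Adj]
    (ha : 2 ≤ a) (hk : a + 2 ≤ k) (hdeg : ∀ v, G.degree v ≤ k - a) :
    ¬ ContainsCopy (broom k a) G := by
  rintro ⟨f, hf⟩
  set P : Finset (Fin n) := insert (f ⟨1, by omega⟩)
    (((Finset.Ico a k).attachFin (fun x hx => (Finset.mem_Ico.mp hx).2)).image f) with hP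
  have hsub : P ⊆ G.neighborFinset (f ⟨0, by omega⟩) := by
    intro u hu
    rw [hP, Finset.mem_insert] at hu
    rw [SimpleGraph.mem_neighborFinset]
    rcases hu with rfl | hu
    · exact hf (broom_adj_path (i := 0) (by omega) (by omega))
    · rw [Finset.mem_image] at hu
      obtain ⟨x, hx, rfl⟩ := hu
      rw [Finset.mem_attachFin, Finset.mem_Ico] at hx
      have := hf (broom_adj_pendant (j := (x:ℕ)) (by omega) hx.1 hx.2)
      rwa [Fin.eta] at this
  have hcard : P.card = k - a + 1 := by
    rw [hP, Finset.card_insert_of_notMem, Finset.card_image_of_injective _ f.injective,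
      Finset.card_attachFin, Nat.card_Ico]
    rw [Finset.mem_image]
    rintro ⟨x, hx, he⟩
    rw [Finset.mem_attachFin, Finset.mem_Ico] at hx
    have := f.injective he
    rw [Fin.ext_iff] at this
    simp only [Fin.val_mk] at this
    omega
  have h1 := Finset.card_le_card hsub
  rw [hcard, SimpleGraph.card_neighborFinset_eq_degree] at h1
  have := hdeg (f ⟨0, by omega⟩)
  omega

end Aux

/-- Theorem (broom lower bound): for `2 ≤ a ≤ k-2` and `n ≥ k`,
`ex_c(n, B(k,a)) ≥ max{⌊(k-a)n/2⌋, ⌊(a-1)/2⌋ (n - ⌊(a-1)/2⌋)}`. -/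
theorem exConn_broom_lower (k a : ℕ) (ha : 2 ≤ a) (hak : a ≤ k - 2)
    (n : ℕ) (hn : k ≤ n) :
    max ((k - a) * n / 2) ((a - 1) / 2 * (n - (a - 1) / 2)) ≤ exConn n (broom k a) := by
  have hk4 : a + 2 ≤ k := by omega
  apply max_le
  · -- circulant construction
    set d := k - a with hd
    have hd2 : 2 ≤ d := by omega
    set m := d / 2 with hmdef
    set hh := n / 2 with hhdef
    have hyp1 : 1 ≤ m := by omega
    have hyp5 : 2*m+2 ≤ n := by omega
    have hyp2 : m < hh := by omega
    have hyp3 : 2*hh ≤ n := by omega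
    have hyp4 : m < n - hh := by omega
    by_cases hpar : d % 2 = 0
    · have hfree := broom_free_of_degree_le (a := a) (k := k) (circG n m hh false) ha hk4
        (fun v => by
          rw [circG_degree v hyp1 hyp2 hyp3 hyp4 hyp5, Dset_card v hyp1 hyp2 hyp3 hyp4 hyp5,
            if_neg (by simp)]
          omega)
      have hconn := circG_connected (n := n) (m := m) (h := hh) (mat := false)
        hyp1 (by omega) (by omega)
      have hle := le_exConn (broom k a) _ hconn hfree
      have hnc : (circG n m hh false).edgeSet.ncard = m * n := by
        rw [Set.ncard_eq_toFinset_card']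
        have := circG_card (mat := false) hyp1 hyp2 hyp3 hyp4 hyp5
        rw [if_neg (by simp)] at this
        rw [show (circG n m hh false).edgeSet.toFinset = (circG n m hh false).edgeFinset from by ext; simp, this]
        omega
      have heq : d * n / 2 = m * n := by
        have : d * n = 2 * (m * n) := by rw [show d = 2*m from by omega]; ring
        omega
      rw [heq, ← hnc]
      exact hle
    · have hfree := broom_free_of_degree_le (a := a) (k := k) (circG n m hh true) ha hk4
        (fun v => by
          rw [circG_degree v hyp1 hyp2 hyp3 hyp4 hyp5, Dset_card v hyp1 hyp2 hyp3 hyp4 hyp5]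
          split_ifs <;> omega)
      have hconn := circG_connected (n := n) (m := m) (h := hh) (mat := true)
        hyp1 (by omega) (by omega)
      have hle := le_exConn (broom k a) _ hconn hfree
      have hnc : (circG n m hh true).edgeSet.ncard = m * n + hh := by
        rw [Set.ncard_eq_toFinset_card']
        have := circG_card (mat := true) hyp1 hyp2 hyp3 hyp4 hyp5
        rw [if_pos rfl] at this
        rw [show (circG n m hh true).edgeSet.toFinset = (circG n m hh true).edgeFinset from by ext; simp, this]
      have heq : d * n / 2 = m * n + hh := by
        have : d * n = 2 * (m * n) + n := by rw [show d = 2*m+1 from by omega]; ring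
        omega
      rw [heq, ← hnc]
      exact hle
  · -- bipartite construction
    set b := (a - 1) / 2 with hb
    by_cases hb0 : b = 0
    · rw [hb0]
      simp
    · have hb1 : 1 ≤ b := by omega
      have hbn : b < n := by omega
      have hfree := bipG_free (n := n) ha hk4 hn hb
      have hconn := bipG_connected hb1 hbn
      have hle := le_exConn (broom k a) _ hconn hfree
      have hnc : (bipG n b).edgeSet.ncard = b * (n - b) := by
        rw [Set.ncard_eq_toFinset_card']
        exact bipG_card (le_of_lt hbn)
      rw [← hnc]
      exact hle
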